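/- Let q ∈ ℂ with 0 < |q| < 1. Then ∑_{j=1}^{∞} ( q^{j^2} / (q;q)_j^2 ) · ∑_{n=1}^{j} q^n / ((1 − q^{n+1})(1 − q^n)) = q^2 / ((1 − q)^2 (q;q)_∞), where the infinite series converges. -/

import Mathlib

open Finset Filter Complex Topology

/-- Finite q-Pochhammer symbol `(a;q)_n = ∏_{k=0}^{n-1} (1 - a q^k)`. -/
noncomputable def qPoch (q a : ℂ) (n : ℕ) : ℂ :=
  ∏ k ∈ Finset.range n, (1 - a * q ^ k)

/-- Infinite q-Pochhammer symbol `(a;q)_∞ = ∏_{k=0}^{∞} (1 - a q^k)`. -/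
noncomputable def qPochInf (q a : ℂ) : ℂ :=
  ∏' k : ℕ, (1 - a * q ^ k)

/-- Gaussian (q-binomial) coefficient `[N choose n]_q`. -/
noncomputable def qBinom (q : ℂ) (N n : ℕ) : ℂ :=
  qPoch q q N / (qPoch q q n * qPoch q q (N - n))

lemma abs_fac_lt {q : ℂ} (hq : ‖q‖ < 1) (n : ℕ) :
    ‖q * q ^ n‖ < 1 := by
  rw [norm_mul, norm_pow]
  calc ‖q‖ * ‖q‖ ^ n ≤ ‖q‖ * 1 := by
        apply mul_le_mul_of_nonneg_left (pow_le_one₀ (norm_nonneg q) hq.le)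
          (norm_nonneg q)
    _ = ‖q‖ := mul_one _
    _ < 1 := hq

lemma fac_ne' {q : ℂ} (hq : ‖q‖ < 1) (n : ℕ) : 1 - q * q ^ n ≠ 0 := by
  intro h
  have h1 : q * q ^ n = 1 := by linear_combination -h
  have := abs_fac_lt hq n
  rw [h1] at this; simp at this

lemma qPoch_ne' {q : ℂ} (hq : ‖q‖ < 1) (n : ℕ) : qPoch q q n ≠ 0 := by
  rw [qPoch]
  exact Finset.prod_ne_zero_iff.2 fun k _ => fac_ne' hq k

lemma qPoch_succ' (q : ℂ) (n : ℕ) : qPoch q q (n + 1) = qPoch q q n * (1 - q * q ^ n) := by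
  rw [qPoch, qPoch, Finset.prod_range_succ]

lemma summable_norm_log {q : ℂ} (hq : ‖q‖ < 1) :
    Summable (fun n : ℕ => ‖Complex.log (1 - q * q ^ n)‖) := by
  apply Summable.of_norm_bounded_eventually_nat (g := fun n => 3/2 * ‖q‖ ^ n)
  · exact (summable_geometric_of_lt_one (norm_nonneg q) hq).mul_left _
  · have h0 : Tendsto (fun n : ℕ => ‖q‖ ^ n) atTop (𝓝 0) :=
      tendsto_pow_atTop_nhds_zero_of_lt_one (norm_nonneg q) hq
    have hev : ∀ᶠ n : ℕ in atTop, ‖q‖ ^ n ≤ 1/2 := by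
      filter_upwards [h0.eventually_lt_const (by norm_num : (0:ℝ) < 1/2)] with n hn
      exact hn.le
    filter_upwards [hev] with n hn
    have hle : ‖-(q * q ^ n)‖ ≤ ‖q‖ ^ n := by
      rw [norm_neg, norm_mul, norm_pow]
      calc ‖q‖ * ‖q‖ ^ n ≤ 1 * ‖q‖ ^ n :=
            mul_le_mul_of_nonneg_right hq.le (by positivity)
        _ = _ := one_mul _
    have hz : ‖-(q * q ^ n)‖ ≤ 1/2 := hle.trans hn
    have key := Complex.norm_log_one_add_half_le_self hz
    rw [norm_norm]
    have : (1 : ℂ) - q * q ^ n = 1 + -(q * q ^ n) := by ring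
    rw [this]
    exact key.trans (mul_le_mul_of_nonneg_left hle (by norm_num))

lemma qPoch_eq_exp {q : ℂ} (hq : ‖q‖ < 1) (m : ℕ) :
    qPoch q q m = Complex.exp (∑ k ∈ Finset.range m, Complex.log (1 - q * q ^ k)) := by
  rw [Complex.exp_sum, qPoch]
  exact Finset.prod_congr rfl fun k _ => (Complex.exp_log (fac_ne' hq k)).symm

lemma qPoch_abs_lower {q : ℂ} (hq : ‖q‖ < 1) (m : ℕ) :
    Real.exp (-(∑' n : ℕ, ‖Complex.log (1 - q * q ^ n)‖)) ≤ ‖qPoch q q m‖ := by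
  rw [qPoch_eq_exp hq m, Complex.norm_exp]
  apply Real.exp_le_exp.2
  have h1 : ‖∑ k ∈ Finset.range m, Complex.log (1 - q * q ^ k)‖
      ≤ ∑' n : ℕ, ‖Complex.log (1 - q * q ^ n)‖ := by
    calc ‖∑ k ∈ Finset.range m, Complex.log (1 - q * q ^ k)‖
        ≤ ∑ k ∈ Finset.range m, ‖Complex.log (1 - q * q ^ k)‖ := norm_sum_le _ _
      _ ≤ _ := (summable_norm_log hq).sum_le_tsum _ (fun k _ => norm_nonneg _)
  have h2 := (Complex.abs_re_le_norm (∑ k ∈ Finset.range m, Complex.log (1 - q * q ^ k)))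
  have := neg_abs_le (∑ k ∈ Finset.range m, Complex.log (1 - q * q ^ k)).re
  linarith

lemma multipliable_fac {q : ℂ} (hq : ‖q‖ < 1) :
    Multipliable (fun k : ℕ => 1 - q * q ^ k) := by
  have := Complex.multipliable_of_summable_log (f := fun k => 1 - q * q ^ k)
    (summable_norm_log hq).of_norm
  exact this

lemma tendsto_qPoch {q : ℂ} (hq : ‖q‖ < 1) :
    Tendsto (fun m : ℕ => qPoch q q m) atTop (𝓝 (qPochInf q q)) := by
  exact HasProd.tendsto_prod_nat (multipliable_fac hq).hasProd

lemma qPochInf_abs_lower {q : ℂ} (hq : ‖q‖ < 1) :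
    Real.exp (-(∑' n : ℕ, ‖Complex.log (1 - q * q ^ n)‖)) ≤ ‖qPochInf q q‖ :=
  ge_of_tendsto ((continuous_norm.tendsto _).comp (tendsto_qPoch hq))
    (Filter.Eventually.of_forall fun m => qPoch_abs_lower hq m)

lemma qPochInf_ne' {q : ℂ} (hq : ‖q‖ < 1) : qPochInf q q ≠ 0 := by
  intro h
  have := qPochInf_abs_lower hq
  rw [h] at this
  simp only [norm_zero] at this
  exact absurd this (not_le.2 (Real.exp_pos _))

lemma mid_id {Pa Pb Pk u v y : ℂ} (ha : Pa ≠ 0) (hb : Pb ≠ 0) (hk : Pk ≠ 0)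
    (hu : u ≠ 0) (hv : v ≠ 0) (hw : v + y * u ≠ 0) (T : ℂ) :
    T / (Pa * u * (Pb * v) * Pk)
      = T / (Pa * u * Pb * Pk) / (v + y * u)
        + T * y / (Pa * (Pb * v) * Pk) / (v + y * u) := by
  have h1 : Pa * u * Pb * Pk * (v + y * u) ≠ 0 :=
    mul_ne_zero (mul_ne_zero (mul_ne_zero (mul_ne_zero ha hu) hb) hk) hw
  have h2 : Pa * (Pb * v) * Pk * (v + y * u) ≠ 0 :=
    mul_ne_zero (mul_ne_zero (mul_ne_zero ha (mul_ne_zero hb hv)) hk) hw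
  have hL : Pa * u * (Pb * v) * Pk ≠ 0 :=
    mul_ne_zero (mul_ne_zero (mul_ne_zero ha hu) (mul_ne_zero hb hv)) hk
  rw [div_div, div_div, div_add_div _ _ h1 h2, div_eq_div_iff hL (mul_ne_zero h1 h2)]
  ring

lemma fin_id {A B u y : ℂ} (hA : A ≠ 0) (hB : B ≠ 0) (hu : u ≠ 0) (hy : 1 - y ≠ 0) :
    1 / (A * B) / u + y * (1 / (A * (B * (1 - y)))) / u
      = 1 / (A * u * (B * (1 - y))) := by
  have h1 : A * B * u ≠ 0 := mul_ne_zero (mul_ne_zero hA hB) hu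
  have h2 : A * (B * (1 - y)) * u ≠ 0 := mul_ne_zero (mul_ne_zero hA (mul_ne_zero hB hy)) hu
  have hR : A * u * (B * (1 - y)) ≠ 0 := mul_ne_zero (mul_ne_zero hA hu) (mul_ne_zero hB hy)
  rw [div_div, mul_one_div, div_div, div_add_div _ _ h1 h2, div_eq_div_iff (mul_ne_zero h1 h2) hR]
  ring

lemma end_id {A C B u : ℂ} (T : ℂ) :
    T / (A * u * C * B) = 0 / u + T / (A * C * B) / u := by
  rw [zero_div, zero_add, div_div]
  ring_nf

lemma zero_id {C A B u : ℂ} :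
    1 / (C * (A * u) * B) = 1 / (C * A * B) / u + 0 / u := by
  rw [zero_div, add_zero, div_div]
  ring_nf

lemma durfee {q : ℂ} (hq : ‖q‖ < 1) : ∀ N k : ℕ,
    ∑ d ∈ Finset.range (N + 1),
        q ^ (d * (d + k)) / (qPoch q q d * qPoch q q (N - d) * qPoch q q (d + k))
      = 1 / (qPoch q q N * qPoch q q (N + k)) := by
  intro N
  induction N with
  | zero =>
    intro k
    simp [qPoch]
  | succ N ih =>
    intro k
    have key : ∀ d ∈ Finset.range (N + 2),
        q ^ (d * (d + k)) / (qPoch q q d * qPoch q q (N + 1 - d) * qPoch q q (d + k)) =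
        (if d ≤ N then q ^ (d * (d + k)) / (qPoch q q d * qPoch q q (N - d) * qPoch q q (d + k)) else 0)
            / (1 - q * q ^ N)
          + (if 1 ≤ d then q ^ (d * (d + k) + (N + 1 - d))
              / (qPoch q q (d - 1) * qPoch q q (N + 1 - d) * qPoch q q (d + k)) else 0)
            / (1 - q * q ^ N) := by
      intro d hd
      rw [Finset.mem_range] at hd
      rcases Nat.eq_zero_or_pos d with rfl | hd1
      · simp only [if_pos (Nat.zero_le N), if_neg (by omega : ¬ 1 ≤ 0)]
        simp only [Nat.zero_mul, Nat.sub_zero, pow_zero, Nat.zero_add]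
        rw [qPoch_succ' q N]
        exact zero_id
      rcases Nat.lt_or_ge d (N + 1) with hdN | hdN
      · obtain ⟨a, rfl⟩ : ∃ a, d = a + 1 := ⟨d - 1, by omega⟩
        obtain ⟨b, rfl⟩ : ∃ b, N = a + 1 + b := ⟨N - (a + 1), by omega⟩
        simp only [if_pos (by omega : a + 1 ≤ a + 1 + b), if_pos (by omega : 1 ≤ a + 1),
          show a + 1 + b + 1 - (a + 1) = b + 1 by omega,
          show a + 1 + b - (a + 1) = b by omega,
          Nat.add_sub_cancel]
        have hx : q ^ ((a + 1) * (a + 1 + k) + (b + 1))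
            = q ^ ((a + 1) * (a + 1 + k)) * (q * q ^ b) := by
          rw [pow_add]; ring
        have hy : (1 : ℂ) - q * q ^ (a + 1 + b)
            = (1 - q * q ^ b) + (q * q ^ b) * (1 - q * q ^ a) := by
          rw [show a + 1 + b = (a + b) + 1 by omega, pow_add, pow_add]; ring
        have hw : (1 - q * q ^ b) + (q * q ^ b) * (1 - q * q ^ a) ≠ 0 :=
          hy ▸ fac_ne' hq (a + 1 + b)
        rw [qPoch_succ' q a, qPoch_succ' q b, hx, hy]
        exact mid_id (qPoch_ne' hq a) (qPoch_ne' hq b) (qPoch_ne' hq (a + 1 + k))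
          (fac_ne' hq a) (fac_ne' hq b) hw _
      · obtain rfl : d = N + 1 := by omega
        simp only [if_neg (by omega : ¬ N + 1 ≤ N), if_pos (by omega : 1 ≤ N + 1),
          Nat.sub_self, Nat.add_sub_cancel, Nat.add_zero]
        rw [qPoch_succ' q N]
        exact end_id _
    rw [Finset.sum_congr rfl key, Finset.sum_add_distrib, ← Finset.sum_div, ← Finset.sum_div]
    have hsum1 : ∑ d ∈ Finset.range (N + 2),
        (if d ≤ N then q ^ (d * (d + k)) / (qPoch q q d * qPoch q q (N - d) * qPoch q q (d + k)) else 0)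
        = 1 / (qPoch q q N * qPoch q q (N + k)) := by
      rw [Finset.sum_range_succ, if_neg (by omega : ¬ N + 1 ≤ N), add_zero]
      rw [Finset.sum_congr rfl (fun d hd => if_pos (by rw [Finset.mem_range] at hd; omega))]
      exact ih k
    have hsum2 : ∑ d ∈ Finset.range (N + 2),
        (if 1 ≤ d then q ^ (d * (d + k) + (N + 1 - d))
            / (qPoch q q (d - 1) * qPoch q q (N + 1 - d) * qPoch q q (d + k)) else 0)
        = q ^ (N + k + 1) * (1 / (qPoch q q N * qPoch q q (N + (k + 1)))) := by
      rw [Finset.sum_range_succ']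
      simp only [if_neg (by omega : ¬ (1:ℕ) ≤ 0), add_zero]
      have hterm : ∀ e ∈ Finset.range (N + 1),
          (if 1 ≤ e + 1 then q ^ ((e + 1) * (e + 1 + k) + (N + 1 - (e + 1)))
              / (qPoch q q (e + 1 - 1) * qPoch q q (N + 1 - (e + 1)) * qPoch q q (e + 1 + k)) else 0)
          = q ^ (N + k + 1) * (q ^ (e * (e + (k + 1)))
              / (qPoch q q e * qPoch q q (N - e) * qPoch q q (e + (k + 1)))) := by
        intro e he
        rw [Finset.mem_range] at he
        rw [if_pos (by omega : 1 ≤ e + 1)]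
        obtain ⟨c, hc⟩ := Nat.le.dest (by omega : e ≤ N)
        have h1 : N + 1 - (e + 1) = c := by omega
        have h3 : e + 1 - 1 = e := by omega
        have hE : (e + 1) * (e + 1 + k) + c = (e + c + k + 1) + e * (e + (k + 1)) := by ring
        rw [h1, h3, hE, pow_add]
        rw [show e + c + k + 1 = N + k + 1 by omega]
        rw [show N - e = c by omega]
        rw [show e + 1 + k = e + (k + 1) by omega]
        rw [mul_div_assoc]
      rw [Finset.sum_congr rfl hterm, ← Finset.mul_sum, ih (k + 1)]
    rw [hsum1, hsum2]
    rw [show N + (k + 1) = N + k + 1 by omega, show N + 1 + k = N + k + 1 by omega,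
      qPoch_succ' q (N + k), qPoch_succ' q N,
      show q ^ (N + k + 1) = q * q ^ (N + k) by rw [pow_succ]; ring]
    exact fin_id (qPoch_ne' hq N) (qPoch_ne' hq (N + k)) (fac_ne' hq N) (fac_ne' hq (N + k))

lemma durfee_inf {q : ℂ} (hq : ‖q‖ < 1) :
    Summable (fun d : ℕ => q ^ (d * (d + 2)) / (qPoch q q d * qPochInf q q * qPoch q q (d + 2))) ∧
    ∑' d : ℕ, q ^ (d * (d + 2)) / (qPoch q q d * qPochInf q q * qPoch q q (d + 2))
      = 1 / (qPochInf q q * qPochInf q q) := by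
  set c : ℝ := Real.exp (-(∑' n : ℕ, ‖Complex.log (1 - q * q ^ n)‖)) with hc
  have hcpos : 0 < c := Real.exp_pos _
  set F : ℕ → ℕ → ℂ := fun N d =>
    if d ≤ N then q ^ (d * (d + 2)) / (qPoch q q d * qPoch q q (N - d) * qPoch q q (d + 2))
    else 0 with hF
  set aF : ℕ → ℂ := fun d =>
    q ^ (d * (d + 2)) / (qPoch q q d * qPochInf q q * qPoch q q (d + 2)) with haF
  set bound : ℕ → ℝ := fun d => ‖q‖ ^ d / (c * c * c) with hbdef
  have hb : Summable bound :=
    (summable_geometric_of_lt_one (norm_nonneg q) hq).div_const _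
  have hnum : ∀ d : ℕ, ‖q ^ (d * (d + 2))‖ ≤ ‖q‖ ^ d := by
    intro d
    rw [norm_pow]
    exact pow_le_pow_of_le_one (norm_nonneg q) hq.le
      (Nat.le_mul_of_pos_right d (by omega))
  have hden : ∀ A B C : ℂ, c ≤ ‖A‖ → c ≤ ‖B‖ → c ≤ ‖C‖ →
      c * c * c ≤ ‖A * B * C‖ := by
    intro A B C h1 h2 h3
    rw [norm_mul, norm_mul]
    apply mul_le_mul (mul_le_mul h1 h2 hcpos.le (norm_nonneg A)) h3 hcpos.le
    exact mul_nonneg (norm_nonneg A) (norm_nonneg B)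
  have hbound : ∀ N d, ‖F N d‖ ≤ bound d := by
    intro N d
    rw [hF, hbdef]
    by_cases hd : d ≤ N
    · simp only [if_pos hd]
      rw [norm_div]
      exact div_le_div₀ (by positivity) (hnum d) (by positivity)
        (hden _ _ _ (qPoch_abs_lower hq d) (qPoch_abs_lower hq (N - d)) (qPoch_abs_lower hq (d + 2)))
    · simp only [if_neg hd, norm_zero]
      positivity
  have haFbound : ∀ d, ‖aF d‖ ≤ bound d := by
    intro d
    rw [haF, hbdef]
    rw [norm_div]
    exact div_le_div₀ (by positivity) (hnum d) (by positivity)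
      (hden _ _ _ (qPoch_abs_lower hq d) (qPochInf_abs_lower hq) (qPoch_abs_lower hq (d + 2)))
  have hsummable : Summable aF := by
    apply Summable.of_norm_bounded hb haFbound
  have hlim : ∀ d : ℕ, Tendsto (fun N => F N d) atTop (𝓝 (aF d)) := by
    intro d
    have hev : (fun N : ℕ => q ^ (d * (d + 2)) / (qPoch q q d * qPoch q q (N - d) * qPoch q q (d + 2)))
        =ᶠ[atTop] (fun N => F N d) := by
      filter_upwards [eventually_ge_atTop d] with N hN
      rw [hF]
      simp only [if_pos hN]
    apply Tendsto.congr' hev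
    have h1 : Tendsto (fun N : ℕ => qPoch q q (N - d)) atTop (𝓝 (qPochInf q q)) :=
      (tendsto_qPoch hq).comp (tendsto_sub_atTop_nat d)
    have h2 : Tendsto (fun N : ℕ => qPoch q q d * qPoch q q (N - d) * qPoch q q (d + 2)) atTop
        (𝓝 (qPoch q q d * qPochInf q q * qPoch q q (d + 2))) :=
      (h1.const_mul _).mul_const _
    exact Tendsto.div tendsto_const_nhds h2
      (mul_ne_zero (mul_ne_zero (qPoch_ne' hq d) (qPochInf_ne' hq)) (qPoch_ne' hq (d + 2)))
  have htsum : ∀ N, ∑' d, F N d = 1 / (qPoch q q N * qPoch q q (N + 2)) := by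
    intro N
    rw [tsum_eq_sum (s := Finset.range (N + 1))
      (fun b hb => by
        simp only [Finset.mem_range] at hb
        simp only [hF]
        rw [if_neg (by omega)])]
    have hcongr : ∀ d ∈ Finset.range (N + 1), F N d
        = q ^ (d * (d + 2)) / (qPoch q q d * qPoch q q (N - d) * qPoch q q (d + 2)) := by
      intro d hd
      simp only [Finset.mem_range] at hd
      simp only [hF]
      rw [if_pos (by omega)]
    rw [Finset.sum_congr rfl hcongr]
    exact durfee hq N 2
  have main : Tendsto (fun N => ∑' d, F N d) atTop (𝓝 (∑' d, aF d)) :=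
    tendsto_tsum_of_dominated_convergence hb hlim (Eventually.of_forall hbound)
  have main2 : Tendsto (fun N : ℕ => 1 / (qPoch q q N * qPoch q q (N + 2))) atTop
      (𝓝 (1 / (qPochInf q q * qPochInf q q))) := by
    apply Tendsto.div tendsto_const_nhds
      ((tendsto_qPoch hq).mul ((tendsto_qPoch hq).comp (tendsto_add_atTop_nat 2)))
      (mul_ne_zero (qPochInf_ne' hq) (qPochInf_ne' hq))
  rw [funext htsum] at main
  exact ⟨hsummable, tendsto_nhds_unique main main2⟩

lemma pow_ne {q : ℂ} (hq : ‖q‖ < 1) (n : ℕ) : 1 - q ^ (n + 1) ≠ 0 := by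
  rw [pow_succ']
  exact fac_ne' hq n

lemma one_sub_q_ne {q : ℂ} (hq : ‖q‖ < 1) : 1 - q ≠ 0 := by
  have := pow_ne hq 0
  simpa using this

lemma telescope {q : ℂ} (hq : ‖q‖ < 1) : ∀ m : ℕ,
    ∑ n ∈ Finset.Icc 1 m, q ^ n / ((1 - q ^ (n + 1)) * (1 - q ^ n))
      = q * (1 - q ^ m) / ((1 - q) ^ 2 * (1 - q ^ (m + 1))) := by
  intro m
  induction m with
  | zero => simp
  | succ m ih =>
    rw [Finset.sum_Icc_succ_top (by omega : 1 ≤ m + 1), ih]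
    have h1 := one_sub_q_ne hq
    have h2 := pow_ne hq m
    have h3 := pow_ne hq (m + 1)
    have e1 : (q : ℂ) ^ (m + 1) = q * q ^ m := by rw [pow_succ']
    have e2 : (q : ℂ) ^ (m + 2) = q * (q * q ^ m) := by rw [pow_succ', pow_succ']
    rw [e1] at h2 ⊢
    rw [show m + 1 + 1 = m + 2 by omega, e2] at h3 ⊢
    have h3' : 1 - q ^ 2 * q ^ m ≠ 0 := by rw [sq, mul_assoc]; exact h3
    field_simp
    ring


lemma term_id {P u v w z S : ℂ} (hP : P ≠ 0) (hu : u ≠ 0) (hv : v ≠ 0) (hw : w ≠ 0) :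
    S * z / (P * u) ^ 2 * (z * u / (w ^ 2 * v)) = z ^ 2 / w ^ 2 * (S / (P * (P * u * v))) := by
  have h1 : (P * u) ^ 2 * (w ^ 2 * v) ≠ 0 := by
    apply mul_ne_zero (pow_ne_zero 2 (mul_ne_zero hP hu))
    exact mul_ne_zero (pow_ne_zero 2 hw) hv
  have h2 : w ^ 2 * (P * (P * u * v)) ≠ 0 := by
    apply mul_ne_zero (pow_ne_zero 2 hw)
    exact mul_ne_zero hP (mul_ne_zero (mul_ne_zero hP hu) hv)
  rw [div_mul_div_comm, div_mul_div_comm, div_eq_div_iff h1 h2]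
  ring

theorem stmt_19 (q : ℂ) (hq0 : 0 < ‖q‖) (hq : ‖q‖ < 1) :
    Summable (fun j : ℕ =>
        q ^ ((j + 1) ^ 2) / (qPoch q q (j + 1)) ^ 2 *
          ∑ n ∈ Finset.Icc 1 (j + 1), q ^ n / ((1 - q ^ (n + 1)) * (1 - q ^ n))) ∧
    ∑' j : ℕ,
        q ^ ((j + 1) ^ 2) / (qPoch q q (j + 1)) ^ 2 *
          ∑ n ∈ Finset.Icc 1 (j + 1), q ^ n / ((1 - q ^ (n + 1)) * (1 - q ^ n))
      = q ^ 2 / ((1 - q) ^ 2 * qPochInf q q) := by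
  obtain ⟨hsum, hval⟩ := durfee_inf hq
  have hPi := qPochInf_ne' hq
  have hterm : ∀ j : ℕ,
      q ^ ((j + 1) ^ 2) / (qPoch q q (j + 1)) ^ 2 *
          ∑ n ∈ Finset.Icc 1 (j + 1), q ^ n / ((1 - q ^ (n + 1)) * (1 - q ^ n))
      = (q ^ 2 / (1 - q) ^ 2) *
          (q ^ (j * (j + 2)) / (qPoch q q j * qPoch q q (j + 2))) := by
    intro j
    rw [telescope hq (j + 1)]
    have hS : (q : ℂ) ^ ((j + 1) ^ 2) = q ^ (j * (j + 2)) * q := by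
      rw [← pow_succ]
      congr 1
      ring
    have e1 : (q : ℂ) ^ (j + 1) = q * q ^ j := by rw [pow_succ']
    have e2 : (q : ℂ) ^ (j + 1 + 1) = q * (q * q ^ j) := by rw [pow_succ', pow_succ']
    have hu := fac_ne' hq j
    have hv : (1 : ℂ) - q * (q * q ^ j) ≠ 0 := by
      have := fac_ne' hq (j + 1)
      rwa [pow_succ'] at this
    rw [show j + 2 = j + 1 + 1 from rfl, qPoch_succ' q (j + 1), qPoch_succ' q j,
      hS, e1, e2]
    exact term_id (qPoch_ne' hq j) hu hv (one_sub_q_ne hq)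
  have hrel : ∀ j : ℕ, q ^ (j * (j + 2)) / (qPoch q q j * qPoch q q (j + 2))
      = qPochInf q q * (q ^ (j * (j + 2)) / (qPoch q q j * qPochInf q q * qPoch q q (j + 2))) := by
    intro j
    have hden1 : qPoch q q j * qPoch q q (j + 2) ≠ 0 :=
      mul_ne_zero (qPoch_ne' hq j) (qPoch_ne' hq (j + 2))
    have hden2 : qPoch q q j * qPochInf q q * qPoch q q (j + 2) ≠ 0 :=
      mul_ne_zero (mul_ne_zero (qPoch_ne' hq j) hPi) (qPoch_ne' hq (j + 2))
    rw [← mul_div_assoc, div_eq_div_iff hden1 hden2]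
    ring
  have hfull : ∀ j : ℕ,
      q ^ ((j + 1) ^ 2) / (qPoch q q (j + 1)) ^ 2 *
          ∑ n ∈ Finset.Icc 1 (j + 1), q ^ n / ((1 - q ^ (n + 1)) * (1 - q ^ n))
      = (q ^ 2 / (1 - q) ^ 2) * (qPochInf q q *
          (q ^ (j * (j + 2)) / (qPoch q q j * qPochInf q q * qPoch q q (j + 2)))) := by
    intro j
    rw [hterm j, hrel j]
  constructor
  · exact ((hsum.mul_left (qPochInf q q)).mul_left (q ^ 2 / (1 - q) ^ 2)).congr
      (fun j => (hfull j).symm)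
  · rw [tsum_congr hfull, tsum_mul_left, tsum_mul_left, hval]
    have h1 : qPochInf q q * (1 / (qPochInf q q * qPochInf q q)) = 1 / qPochInf q q := by
      rw [mul_one_div]
      field_simp
    rw [h1, div_mul_div_comm, mul_one]
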